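/- arXiv:2107.11128 — 3 statements merged into one kernel-verified Lean document; each statement's English description precedes it below -/
import Mathlib

section
/- Let g = sl_{n+1}(ℂ) and let k ∈ ℚ be an admissible number for g. Let λ ∈ Pr̄_k and let μ ∈ W·λ (the dot-action orbit of λ). Then μ ∈ Pr̄_k if and only if μ is a dominant weight. -/
/-!
Combinatorial model for the paper "Admissible representations of simple affine
vertex algebras" for `g = sl_{n+1}(ℂ)`.

* `Weight n` models `h*` (linear functionals on diagonal matrices; every notion
  used below depends only on differences of coordinates, hence is well defined
  on the honest `h*`, the quotient by the constants).
* `Weyl n` is the Weyl group `S_{n+1}` of `sl_{n+1}`.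
* `Root n` is the root system: pairs `(i,j)`, `i ≠ j`, representing `ε_i - ε_j`.
-/

namespace PaperSL

noncomputable section

abbrev Weight (n : ℕ) := Fin (n + 1) → ℂ

abbrev Weyl (n : ℕ) := Equiv.Perm (Fin (n + 1))

structure Root (n : ℕ) where
  i : Fin (n + 1)
  j : Fin (n + 1)
  ne : i ≠ j

variable {n : ℕ}

/-- the pairing `⟨μ, α^∨⟩` for `α = ε_i - ε_j`. -/
def rpair (μ : Weight n) (α : Root n) : ℂ := μ α.i - μ α.j

/-- `α` is a positive root (w.r.t. the standard Borel subalgebra). -/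
def Root.IsPos (α : Root n) : Prop := α.i < α.j

/-- (a representative of) the Weyl vector `ρ`:  `⟨ρ, α^∨⟩ = 1` for simple `α`. -/
def rho (n : ℕ) : Weight n := fun i => -((i : ℕ) : ℂ)

/-- action of the Weyl group on weights. -/
def wAct (w : Weyl n) (μ : Weight n) : Weight n := fun i => μ (w⁻¹ i)

/-- action of the Weyl group on roots. -/
def rAct (w : Weyl n) (α : Root n) : Root n :=
  ⟨w α.i, w α.j, fun h => α.ne (w.injective h)⟩

/-- the dot action `w · λ = w(λ + ρ) - ρ`. -/
def dot (w : Weyl n) (μ : Weight n) : Weight n := wAct w (μ + rho n) - rho n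

/-- `z ∈ ℤ ⊆ ℂ`. -/
def IsInt (z : ℂ) : Prop := ∃ m : ℤ, z = (m : ℂ)

/-- `z ∈ ℕ₀ = {0,1,2,…} ⊆ ℂ`. -/
def IsNat (z : ℂ) : Prop := ∃ m : ℕ, z = (m : ℂ)

/-- `z ∈ ℕ = {1,2,…} ⊆ ℂ`. -/
def IsPosInt (z : ℂ) : Prop := ∃ m : ℕ, z = (m : ℂ) + 1

/-- `μ` is dominant: `⟨μ + ρ, α^∨⟩ ∉ -ℕ` for all positive roots `α`. -/
def IsDominant (μ : Weight n) : Prop :=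
  ∀ α : Root n, α.IsPos → ¬ IsPosInt (-(rpair (μ + rho n) α))

/-- the simple root `α_{r+1} = ε_r - ε_{r+1}` (`0`-indexed). -/
def simple (r : Fin n) : Root n :=
  ⟨r.castSucc, r.succ, by
    simp only [ne_eq, Fin.ext_iff, Fin.coe_castSucc, Fin.val_succ]
    omega⟩

/-- the simple reflection `s_{α_{r+1}}`, i.e. the transposition `(r, r+1)`. -/
def srefl (r : Fin n) : Weyl n := Equiv.swap r.castSucc r.succ

/-- (a representative of) the fundamental weight `ω_{r+1}` (`0`-indexed). -/
def fw (r : Fin n) : Weight n := fun i => if (i : ℕ) ≤ (r : ℕ) then 1 else 0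

/-- the root `-θ`, the negative of the highest root `θ = ε_0 - ε_n`. -/
def negTheta (hn : 0 < n) : Root n :=
  ⟨Fin.last n, 0, by
    simp only [ne_eq, Fin.ext_iff, Fin.val_last, Fin.val_zero]
    omega⟩

/-! Real affine roots `α + mδ` of `ŝl_{n+1}`, modeled as pairs `(α, m)`. -/

abbrev ARoot (n : ℕ) := Root n × ℤ

/-- positivity of real affine roots. -/
def ARoot.IsPos (β : ARoot n) : Prop := 0 < β.2 ∨ (β.2 = 0 ∧ β.1.IsPos)

/-- `⟨λ + kΛ₀ + ρ̂, (α + mδ)^∨⟩ = ⟨λ + ρ, α^∨⟩ + m(k + h^∨)`, `h^∨ = n + 1`. -/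
def apair (k : ℚ) (μ : Weight n) (β : ARoot n) : ℂ :=
  rpair (μ + rho n) β.1 + (β.2 : ℂ) * ((k : ℂ) + (n : ℂ) + 1)

/-- the integral root system `Δ̂(λ + kΛ₀)`. -/
def aIntegral (k : ℚ) (μ : Weight n) : Set (ARoot n) := {β | IsInt (apair k μ β)}

/-- `λ + kΛ₀` is regular dominant: `⟨λ + kΛ₀ + ρ̂, β^∨⟩ ∉ -ℕ₀` for positive `β`. -/
def IsRegDominantAff (k : ℚ) (μ : Weight n) : Prop :=
  ∀ β : ARoot n, ARoot.IsPos β → ¬ IsNat (-(apair k μ β))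

/-- a real affine root as a rational vector (finite part, coefficient of `δ`). -/
def ARoot.vec (β : ARoot n) : (Fin (n + 1) → ℚ) × ℚ :=
  (fun t => (if t = β.1.i then 1 else 0) - (if t = β.1.j then 1 else 0), (β.2 : ℚ))

/-- the `ℚ`-span of `Δ̂(λ + kΛ₀)` contains all real affine roots. -/
def SpanFull (k : ℚ) (μ : Weight n) : Prop :=
  ∀ β : ARoot n, ARoot.vec β ∈ Submodule.span ℚ (ARoot.vec '' aIntegral k μ)

/-- `λ + kΛ₀` is an admissible weight (Kac–Wakimoto). -/
def IsAdmissibleWeight (k : ℚ) (μ : Weight n) : Prop :=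
  IsRegDominantAff k μ ∧ SpanFull k μ

/-- the action of `w t_{-η}` (a general element of the extended affine Weyl group
`W̃ = W ⋉ P^∨`) on real affine roots: `w t_{-η}(α + mδ) = w(α) + (m + (η,α))δ`.
A coweight `η ∈ P^∨` is modeled by an integer-valued function on coordinates. -/
def aAct (w : Weyl n) (η : Fin (n + 1) → ℤ) (β : ARoot n) : ARoot n :=
  (rAct w β.1, β.2 + (η β.1.i - η β.1.j))

/-- `Pr̄_k`: the projections to `h*` of the admissible weights `λ` of level `k`
with `Δ̂(λ) = y(Δ̂(kΛ₀))` for some `y ∈ W̃`. -/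
def Pr (n : ℕ) (k : ℚ) : Set (Weight n) :=
  {μ | IsAdmissibleWeight k μ ∧
    ∃ (w : Weyl n) (η : Fin (n + 1) → ℤ),
      aIntegral k μ = aAct w η '' aIntegral k (0 : Weight n)}

/-- `k` is an admissible number for `sl_{n+1}` with numerator `p`, denominator `q`:
`k + n + 1 = p/q`, `p,q ∈ ℕ`, `(p,q) = 1`, `p ≥ n+1`. -/
def IsAdmissibleNum (n : ℕ) (k : ℚ) (p q : ℕ) : Prop :=
  0 < p ∧ 0 < q ∧ Nat.Coprime p q ∧ n + 1 ≤ p ∧ (k + (n : ℚ) + 1) = (p : ℚ) / (q : ℚ)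

/-- `k` is an admissible number for `sl_{n+1}`. -/
def IsAdmissible (n : ℕ) (k : ℚ) : Prop := ∃ p q : ℕ, IsAdmissibleNum n k p q

/-- the integral root system `Δ(λ) = {α ∈ Δ : ⟨λ+ρ, α^∨⟩ ∈ ℤ}`. -/
def fIntegral (μ : Weight n) : Set (Root n) := {α | IsInt (rpair (μ + rho n) α)}

/-- the root subsystem `Δ_Σ` generated by a subset `Σ` of the simple roots
(a standard parabolic subalgebra is modeled by its set `Σ` of simple roots). -/
def DeltaSigma (Sg : Finset (Fin n)) : Set (Root n) :=
  {α | ∀ t : Fin n, min (α.i : ℕ) (α.j : ℕ) ≤ (t : ℕ) →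
    (t : ℕ) < max (α.i : ℕ) (α.j : ℕ) → t ∈ Sg}

/-- `W^λ` resp. `W^p`: `{w ∈ W : Δ₊ ∩ w(-Δ₊) ⊆ Δ₊ \ S}` for `S = Δ(λ)` resp. `Δ_Σ`. -/
def WSet (S : Set (Root n)) : Set (Weyl n) :=
  {w | ∀ α : Root n, α.IsPos → ¬ (rAct w⁻¹ α).IsPos → α ∉ S}

/-- `Pr̄_{k,ℤ} = {λ : ⟨λ, α_i^∨⟩ ∈ ℕ₀ ∀ i, ⟨λ, θ^∨⟩ ≤ p - n - 1}`, `p = (k+n+1)q`. -/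
def PrZ (n p : ℕ) : Set (Weight n) :=
  {μ | (∀ r : Fin n, IsNat (rpair μ (simple r))) ∧
    ∃ m : ℕ, μ 0 - μ (Fin.last n) = (m : ℂ) ∧ m + (n + 1) ≤ p}

/-- `(η, α)` for a coweight `η` and a root `α`. -/
def cpair (η : Fin (n + 1) → ℤ) (α : Root n) : ℤ := η α.i - η α.j

/-- `η ∈ P₊^∨` (dominant coweight). -/
def IsDomCoweight (η : Fin (n + 1) → ℤ) : Prop := ∀ r : Fin n, η r.succ ≤ η r.castSucc

/-- `(η, θ)` for the highest root `θ`. -/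
def cTheta (η : Fin (n + 1) → ℤ) : ℤ := η 0 - η (Fin.last n)

/-- `Π^η = {α ∈ Π : (η, α) = 0}`. -/
def PiEta (η : Fin (n + 1) → ℤ) : Finset (Fin n) :=
  Finset.univ.filter fun r => η r.castSucc = η r.succ

/-- a coweight regarded as an element of `h*` (via the normalized bilinear form). -/
def coToW (η : Fin (n + 1) → ℤ) : Weight n := fun i => ((η i : ℤ) : ℂ)

/-- `Λ_k(p) = {λ - (k+n+1)η : λ ∈ Pr̄_{k,ℤ}, η ∈ P₊^∨, (η,θ) ≤ q-1, Π^η = Σ_p}`. -/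
def Lam (n : ℕ) (k : ℚ) (p q : ℕ) (Sg : Finset (Fin n)) : Set (Weight n) :=
  {ν | ∃ μ ∈ PrZ n p, ∃ η : Fin (n + 1) → ℤ,
    IsDomCoweight η ∧ cTheta η ≤ (q : ℤ) - 1 ∧ PiEta η = Sg ∧
    ν = μ - ((k : ℂ) + (n : ℂ) + 1) • coToW η}

/-- the saturation of a set of weights under the dot action of `W`; the image of
`S` in the quotient `[Pr̄_k] = Pr̄_k/∼` is faithfully encoded by `dotOrbitSat S`. -/
def dotOrbitSat (S : Set (Weight n)) : Set (Weight n) :=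
  {ν | ∃ μ ∈ S, ∃ w : Weyl n, ν = dot w μ}

/-- the set `{α_1, …, α_n, -θ}`. -/
def extSet (hn : 0 < n) : Set (Root n) := Set.range simple ∪ {negTheta hn}

/-- `w = w_j`: the unique element of `W` preserving `{α_1,…,α_n,-θ}` with
`w(-θ) = α_j` (here `j : Fin n` is `0`-indexed). -/
def IsWj (hn : 0 < n) (w : Weyl n) (j : Fin n) : Prop :=
  rAct w '' extSet hn = extSet hn ∧ rAct w (negTheta hn) = simple j

/-- the subgroup `W₊ = ⟨w_1, …, w_n⟩` of `W`. -/
def WPlus (hn : 0 < n) : Subgroup (Weyl n) :=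
  Subgroup.closure {w | ∃ j : Fin n, IsWj hn w j}

/-- `w(Σ_p) = Σ_p` as sets of simple roots. -/
def fixesSigma (w : Weyl n) (Sg : Finset (Fin n)) : Prop :=
  rAct w '' (simple '' (Sg : Set (Fin n))) = simple '' (Sg : Set (Fin n))

/-- `W₊^p = {w ∈ W₊ : w(Σ_p) = Σ_p}`. -/
def WPlusP (hn : 0 < n) (Sg : Finset (Fin n)) : Set (Weyl n) :=
  {w | w ∈ WPlus hn ∧ fixesSigma w Sg}

/-- `p_{Σ₁} ∼ p_{Σ₂}`: the root subsystems `Δ_{Σ₁}` and `Δ_{Σ₂}` are `W`-conjugate. -/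
def DeltaConj (S1 S2 : Finset (Fin n)) : Prop :=
  ∃ w : Weyl n, DeltaSigma S1 = rAct w '' DeltaSigma S2

/-! Partitions (as multisets), Richardson orbits. -/

/-- the cut positions of the Levi blocks of the parabolic with simple roots `Σ`. -/
def cuts (Sg : Finset (Fin n)) : Finset ℕ :=
  insert 0 (insert (n + 1) ((Finset.univ \ Sg).image fun r : Fin n => (r : ℕ) + 1))

/-- the block sizes of the Levi subalgebra of the parabolic with simple roots `Σ`
(a partition of `n+1`). -/
def blockSizes (Sg : Finset (Fin n)) : Multiset ℕ :=
  (((((cuts Sg).sort (· ≤ ·)).zip ((cuts Sg).sort (· ≤ ·)).tail).map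
    fun ab => ab.2 - ab.1 : List ℕ) : Multiset ℕ)

/-- the transpose of a partition given as a multiset. -/
def transposeM (μ : Multiset ℕ) : Multiset ℕ :=
  Multiset.filter (fun c => 0 < c)
    (((List.range μ.sum).map fun j =>
      Multiset.card (μ.filter fun x => j + 1 ≤ x) : List ℕ) : Multiset ℕ)

/-- the partition of the Richardson orbit `O_{p_Σ}` attached to the standard
parabolic subalgebra with simple roots `Σ`: the transpose of the Levi block sizes. -/
def richardson (Sg : Finset (Fin n)) : Multiset ℕ := transposeM (blockSizes Sg)

/-- the set `Σ_μ` of simple roots of the standard parabolic subalgebra `p_μ`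
attached to a partition `μ` of `n+1`: the complement of the partial sums of the
(decreasingly ordered) parts. -/
def sigmaOfPartition (μ : Multiset ℕ) : Finset (Fin n) :=
  Finset.univ.filter fun r : Fin n =>
    ((r : ℕ) + 1) ∉ List.scanl (· + ·) 0 (μ.sort (· ≤ ·)).reverse

/-- the length function on `W = S_{n+1}` (number of inversions). -/
def len (w : Weyl n) : ℕ :=
  (Finset.univ.filter fun pr : Fin (n + 1) × Fin (n + 1) =>
    pr.1 < pr.2 ∧ w pr.2 < w pr.1).card

/-- the coefficients in `w_j(∑ λ_i ω_i) = ∑_{i<j} λ_{n+1+i-j} ω_i - (∑ λ_i) ω_j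
+ ∑_{i>j} λ_{i-j} ω_i` (all `0`-indexed). -/
def twCoeff (lamb : Fin n → ℂ) (j i : Fin n) : ℂ :=
  if _ : (i : ℕ) < (j : ℕ) then
    lamb ⟨n + (i : ℕ) - (j : ℕ), by have := j.isLt; omega⟩
  else if (i : ℕ) = (j : ℕ) then -(∑ t, lamb t)
  else lamb ⟨(i : ℕ) - (j : ℕ) - 1, by have := i.isLt; omega⟩

section Aux

variable {n : ℕ}

lemma Root.ext' {α β : Root n} (hi : α.i = β.i) (hj : α.j = β.j) : α = β := by
  cases α; cases β; simp_all

lemma rAct_inv_rAct (w : Weyl n) (α : Root n) : rAct w (rAct w⁻¹ α) = α :=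
  Root.ext' (by simp [rAct]) (by simp [rAct])

lemma rAct_rAct (w w' : Weyl n) (α : Root n) : rAct w (rAct w' α) = rAct (w * w') α :=
  Root.ext' (by simp [rAct]) (by simp [rAct])

lemma aAct_zero_apply (w : Weyl n) (β : ARoot n) :
    aAct w (0 : Fin (n + 1) → ℤ) β = (rAct w β.1, β.2) := by
  simp [aAct]

lemma aAct_zero_aAct_zero_inv (w : Weyl n) (β : ARoot n) :
    aAct w 0 (aAct w⁻¹ 0 β) = β := by
  simp [aAct_zero_apply, rAct_inv_rAct]

lemma aAct_zero_comp (w w' : Weyl n) (η : Fin (n + 1) → ℤ) (β : ARoot n) :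
    aAct w 0 (aAct w' η β) = aAct (w * w') η β := by
  simp [aAct, rAct_rAct]

lemma apair_dot (k : ℚ) (w : Weyl n) (lam : Weight n) (β : ARoot n) :
    apair k (dot w lam) β = apair k lam (rAct w⁻¹ β.1, β.2) := by
  simp only [apair, rpair, dot, wAct, rAct, Pi.add_apply, Pi.sub_apply]
  ring

lemma mem_aIntegral_dot (k : ℚ) (w : Weyl n) (lam : Weight n) (β : ARoot n) :
    β ∈ aIntegral k (dot w lam) ↔ aAct w⁻¹ 0 β ∈ aIntegral k lam := by
  simp [aIntegral, apair_dot, aAct_zero_apply]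

lemma aIntegral_dot (k : ℚ) (w : Weyl n) (lam : Weight n) :
    aIntegral k (dot w lam) = aAct w 0 '' aIntegral k lam := by
  ext β
  rw [mem_aIntegral_dot]
  constructor
  · intro h
    exact ⟨aAct w⁻¹ 0 β, h, aAct_zero_aAct_zero_inv w β⟩
  · rintro ⟨γ, hγ, rfl⟩
    rwa [show aAct w⁻¹ 0 (aAct w 0 γ) = γ by
      rw [aAct_zero_comp, inv_mul_cancel]; simp [aAct, rAct]]

lemma apair_neg (k : ℚ) (lam : Weight n) (α : Root n) (m : ℤ) :
    apair k lam (⟨α.j, α.i, α.ne.symm⟩, -m) = -apair k lam (α, m) := by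
  simp [apair, rpair]; ring

lemma ne_zero_of_regdom {k : ℚ} {lam : Weight n} (h : IsRegDominantAff k lam)
    (β : ARoot n) : apair k lam β ≠ 0 := by
  obtain ⟨α, m⟩ := β
  have key : ∀ γ : ARoot n, γ.IsPos → apair k lam γ ≠ 0 := by
    intro γ hγ h0
    exact h γ hγ ⟨0, by rw [h0]; simp⟩
  rcases lt_trichotomy m 0 with hm | hm | hm
  · intro h0
    refine key (⟨α.j, α.i, α.ne.symm⟩, -m) (Or.inl (by omega)) ?_
    rw [apair_neg, h0, neg_zero]
  · subst hm
    rcases lt_or_gt_of_ne (fun hij : α.i = α.j => α.ne hij) with hij | hij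
    · exact key (α, 0) (Or.inr ⟨rfl, hij⟩)
    · intro h0
      refine key (⟨α.j, α.i, α.ne.symm⟩, -0) (Or.inr ⟨by omega, hij⟩) ?_
      rw [apair_neg, h0, neg_zero]
  · exact key (α, m) (Or.inl hm)

lemma vec_aAct_zero (w : Weyl n) (β : ARoot n) :
    ARoot.vec (aAct w 0 β) =
      ((LinearMap.funLeft ℚ ℚ ⇑w⁻¹).prodMap LinearMap.id) (ARoot.vec β) := by
  refine Prod.ext (funext fun t => ?_) (by simp [ARoot.vec, aAct_zero_apply])
  have h1 : ∀ x : Fin (n + 1), (t = w x) ↔ (w⁻¹ t = x) :=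
    fun x => ⟨fun h => by subst h; simp, fun h => by rw [← h]; simp⟩
  simp only [ARoot.vec, aAct_zero_apply, rAct, LinearMap.prodMap_apply,
    LinearMap.funLeft_apply, Function.comp, h1]

end Aux

/-- Let `g = sl_{n+1}(ℂ)` and `k ∈ ℚ` an admissible number for
`g`.  Let `λ ∈ Pr̄_k` and `μ ∈ W·λ` (dot action orbit).  Then `μ ∈ Pr̄_k` if and
only if `μ` is a dominant weight. -/
theorem statement0 (n : ℕ) (hn : 0 < n) (k : ℚ) (hk : IsAdmissible n k)
    (lam mu : Weight n) (hlam : lam ∈ Pr n k)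
    (hmu : ∃ w : Weyl n, mu = dot w lam) :
    mu ∈ Pr n k ↔ IsDominant mu := by
  obtain ⟨w, rfl⟩ := hmu
  obtain ⟨⟨hreg, hspan⟩, w0, η0, hI⟩ := hlam
  constructor
  · rintro ⟨⟨hreg', -⟩, -⟩
    intro α hα hpos
    obtain ⟨m, hm⟩ := hpos
    refine hreg' (α, 0) (Or.inr ⟨rfl, hα⟩) ⟨m + 1, ?_⟩
    have : apair k (dot w lam) (α, 0) = rpair (dot w lam + rho n) α := by
      simp [apair]
    rw [this]; push_cast; rw [hm]
  · intro hdom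
    have hreg2 : IsRegDominantAff k (dot w lam) := by
      rintro ⟨α, m⟩ hpos hnat
      rcases hpos with hm | ⟨hm, hα⟩
      · rw [show ((α, m) : ARoot n) = (((α, m) : ARoot n).1, ((α, m) : ARoot n).2) from rfl,
          apair_dot] at hnat
        exact hreg (rAct w⁻¹ α, m) (Or.inl hm) hnat
      · subst hm
        obtain ⟨s, hs⟩ := hnat
        have hap : apair k (dot w lam) (α, 0) = rpair (dot w lam + rho n) α := by
          simp [apair]
        cases s with
        | zero =>
          have h0 : apair k (dot w lam) (α, 0) = 0 := by
            refine neg_eq_zero.mp ?_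
            rw [hs]; simp
          rw [show ((α, (0:ℤ)) : ARoot n) = (((α, (0:ℤ)) : ARoot n).1,
            ((α, (0:ℤ)) : ARoot n).2) from rfl, apair_dot] at h0
          exact ne_zero_of_regdom hreg _ h0
        | succ s =>
          refine hdom α hα ⟨s, ?_⟩
          rw [← hap, hs]; push_cast; ring
    refine ⟨⟨hreg2, ?_⟩, w * w0, η0, ?_⟩
    · intro β
      rw [aIntegral_dot]
      have himg : ARoot.vec '' (aAct w 0 '' aIntegral k lam) =
          ((LinearMap.funLeft ℚ ℚ ⇑w⁻¹).prodMap LinearMap.id) ''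
            (ARoot.vec '' aIntegral k lam) := by
        rw [Set.image_image, Set.image_image]
        exact Set.image_congr fun γ _ => vec_aAct_zero w γ
      rw [himg, Submodule.span_image]
      have hβ : ARoot.vec β =
          ((LinearMap.funLeft ℚ ℚ ⇑w⁻¹).prodMap LinearMap.id)
            (ARoot.vec (aAct w⁻¹ 0 β)) := by
        rw [← vec_aAct_zero, aAct_zero_aAct_zero_inv]
      rw [hβ]
      exact Submodule.mem_map_of_mem (hspan _)
    · rw [aIntegral_dot, hI, Set.image_image]
      exact Set.image_congr fun γ _ => aAct_zero_comp w w0 η0 γ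

end

end PaperSL
end

section
/- Let g = sl_{n+1}(ℂ), k an admissible number for g with denominator q, y ∈ W and η ∈ P^∨. Then the condition y t_{−η}(Δ̂(kΛ_0)_+) ⊆ Δ̂_+^re is equivalent to: 0 ≤ (η,α) ≤ q−1 whenever y(α) ∈ Δ_+ and 1 ≤ (η,α) ≤ q whenever y(α) ∈ Δ_−, for all α ∈ Δ_+. Moreover, if η ∈ P_+^∨ satisfies (η,θ) ≤ q−1, then y t_{−η}(Δ̂(kΛ_0)_+) ⊆ Δ̂_+^re holds if and only if y^{-1} ∈ W^{p_Σ} with Σ = {α ∈ Π : (η,α) = 0}. -/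
/-!
Combinatorial model for the paper "Admissible representations of simple affine
vertex algebras" for `g = sl_{n+1}(ℂ)`.

* `Weight n` models `h*` (linear functionals on diagonal matrices; every notion
  used below depends only on differences of coordinates, hence is well defined
  on the honest `h*`, the quotient by the constants).
* `Weyl n` is the Weyl group `S_{n+1}` of `sl_{n+1}`.
* `Root n` is the root system: pairs `(i,j)`, `i ≠ j`, representing `ε_i - ε_j`.
-/

namespace PaperSL

noncomputable section

variable {n : ℕ}

/-! ### Auxiliary lemmas for Statement 3 -/

/-- the negative of a root. -/
def Root.neg' (α : Root n) : Root n := ⟨α.j, α.i, α.ne.symm⟩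

lemma neg'_isPos_iff (α : Root n) : α.neg'.IsPos ↔ ¬ α.IsPos := by
  have h : (α.i : ℕ) ≠ (α.j : ℕ) := fun h => α.ne (Fin.ext h)
  simp only [Root.neg', Root.IsPos, Fin.lt_def]
  omega

lemma rAct_neg' (w : Weyl n) (α : Root n) : rAct w α.neg' = (rAct w α).neg' := rfl

lemma cpair_neg' (η : Fin (n + 1) → ℤ) (α : Root n) :
    cpair η α.neg' = -cpair η α := by
  simp [cpair, Root.neg']

lemma mem_aIntegral_zero {k : ℚ} {p q : ℕ} (hk : IsAdmissibleNum n k p q)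
    (β : ARoot n) : β ∈ aIntegral k (0 : Weight n) ↔ (q : ℤ) ∣ β.2 := by
  obtain ⟨hp, hq, hco, hnp, hkk⟩ := hk
  have hq0 : ((q : ℕ) : ℂ) ≠ 0 := Nat.cast_ne_zero.mpr hq.ne'
  have hkC : (k : ℂ) + (n : ℂ) + 1 = (p : ℂ) / (q : ℂ) := by
    have h := congrArg (fun x : ℚ => (x : ℂ)) hkk
    push_cast at h
    exact h
  have happ : apair k (0 : Weight n) β =
      ((β.1.j : ℕ) : ℂ) - ((β.1.i : ℕ) : ℂ) + (β.2 : ℂ) * ((p : ℂ) / (q : ℂ)) := by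
    simp only [apair, rpair, rho, Pi.add_apply, Pi.zero_apply, zero_add, hkC]
    ring
  constructor
  · rintro ⟨t, ht⟩
    rw [happ] at ht
    field_simp at ht
    have hz : (((β.1.j : ℕ) : ℤ) - ((β.1.i : ℕ) : ℤ)) * q + β.2 * p = t * q := by
      rw [mul_comm t]; exact_mod_cast ht
    have hdvd : (q : ℤ) ∣ β.2 * p :=
      ⟨t - (((β.1.j : ℕ) : ℤ) - ((β.1.i : ℕ) : ℤ)), by linarith⟩
    have hcop : IsCoprime ((q : ℕ) : ℤ) ((p : ℕ) : ℤ) :=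
      (Nat.isCoprime_iff_coprime.mpr hco).symm
    exact hcop.dvd_of_dvd_mul_right hdvd
  · rintro ⟨s, hs⟩
    refine ⟨((β.1.j : ℕ) : ℤ) - ((β.1.i : ℕ) : ℤ) + s * p, ?_⟩
    rw [happ, hs]
    push_cast
    field_simp


lemma dom_antitone' {η : Fin (n + 1) → ℤ} (h : IsDomCoweight η) :
    ∀ d : ℕ, ∀ a b : Fin (n + 1), (b : ℕ) = (a : ℕ) + d → η b ≤ η a := by
  intro d
  induction d with
  | zero =>
    intro a b hab
    have : a = b := Fin.ext (by omega)
    rw [this]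
  | succ d ih =>
    intro a b hab
    have hbn : (b : ℕ) - 1 < n := by have := b.isLt; omega
    set r : Fin n := ⟨(b : ℕ) - 1, hbn⟩ with hr
    have hsucc : r.succ = b := Fin.ext (by simp [Fin.val_succ, hr]; omega)
    have h1 : η r.succ ≤ η r.castSucc := h r
    have h2 : η r.castSucc ≤ η a := by
      refine ih a r.castSucc ?_
      simp [Fin.coe_castSucc, hr]; omega
    rw [hsucc] at h1
    exact h1.trans h2

lemma dom_antitone {η : Fin (n + 1) → ℤ} (h : IsDomCoweight η)
    (a b : Fin (n + 1)) (hab : a ≤ b) : η b ≤ η a :=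
  dom_antitone' h ((b : ℕ) - (a : ℕ)) a b (by have := Fin.le_def.mp hab; omega)

lemma eta_telescope {η : Fin (n + 1) → ℤ} :
    ∀ d : ℕ, ∀ a b : Fin (n + 1), (b : ℕ) = (a : ℕ) + d →
      (∀ t : Fin n, (a : ℕ) ≤ (t : ℕ) → (t : ℕ) < (b : ℕ) → η t.castSucc = η t.succ) →
      η a = η b := by
  intro d
  induction d with
  | zero =>
    intro a b hab _
    have : a = b := Fin.ext (by omega)
    rw [this]
  | succ d ih =>
    intro a b hab hst
    have hbn : (b : ℕ) - 1 < n := by have := b.isLt; omega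
    set r : Fin n := ⟨(b : ℕ) - 1, hbn⟩ with hr
    have hsucc : r.succ = b := Fin.ext (by simp [Fin.val_succ, hr]; omega)
    have h1 : η r.castSucc = η r.succ :=
      hst r (by simp [hr]; omega) (by rw [← hsucc, Fin.val_succ]; omega)
    have h2 : η a = η r.castSucc := by
      refine ih a r.castSucc (by simp [Fin.coe_castSucc, hr]; omega) ?_
      intro t ht1 ht2
      exact hst t ht1 (by simp [Fin.coe_castSucc, hr] at ht2 ⊢; omega)
    rw [h2, h1, hsucc]

/-- For `y ∈ W` and a coweight `η ∈ P^∨`, the condition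
`y t_{-η}(Δ̂(kΛ₀)₊) ⊆ Δ̂₊^re` is equivalent to `0 ≤ (η,α) ≤ q-1` whenever
`y(α) ∈ Δ₊` and `1 ≤ (η,α) ≤ q` whenever `y(α) ∈ Δ₋`, for all `α ∈ Δ₊`.
Moreover, if `η ∈ P₊^∨` with `(η,θ) ≤ q-1`, the condition holds iff
`y⁻¹ ∈ W^{p_Σ}` with `Σ = {α ∈ Π : (η,α) = 0}`. -/
theorem statement3 (n : ℕ) (hn : 0 < n) (k : ℚ) (p q : ℕ)
    (hk : IsAdmissibleNum n k p q) (y : Weyl n) (η : Fin (n + 1) → ℤ) :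
    ((∀ β ∈ aIntegral k (0 : Weight n), ARoot.IsPos β → ARoot.IsPos (aAct y η β)) ↔
      ∀ α : Root n, α.IsPos →
        ((rAct y α).IsPos → 0 ≤ cpair η α ∧ cpair η α ≤ (q : ℤ) - 1) ∧
        (¬ (rAct y α).IsPos → 1 ≤ cpair η α ∧ cpair η α ≤ (q : ℤ))) ∧
    (IsDomCoweight η → cTheta η ≤ (q : ℤ) - 1 →
      ((∀ β ∈ aIntegral k (0 : Weight n), ARoot.IsPos β → ARoot.IsPos (aAct y η β)) ↔
        y⁻¹ ∈ WSet (DeltaSigma (PiEta η)))) := by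
  have hq : 0 < q := hk.2.1
  have main : (∀ β ∈ aIntegral k (0 : Weight n), ARoot.IsPos β → ARoot.IsPos (aAct y η β)) ↔
      ∀ α : Root n, α.IsPos →
        ((rAct y α).IsPos → 0 ≤ cpair η α ∧ cpair η α ≤ (q : ℤ) - 1) ∧
        (¬ (rAct y α).IsPos → 1 ≤ cpair η α ∧ cpair η α ≤ (q : ℤ)) := by
    constructor
    · intro H α hα
      have h0 := H (α, 0) ((mem_aIntegral_zero hk _).mpr (dvd_zero _))
        (Or.inr ⟨rfl, hα⟩)
      have h1 := H (α.neg', (q : ℤ)) ((mem_aIntegral_zero hk _).mpr dvd_rfl)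
        (Or.inl (show (0:ℤ) < ((q:ℕ):ℤ) from by exact_mod_cast hq))
      simp only [aAct, ARoot.IsPos, rAct_neg'] at h0 h1
      rw [neg'_isPos_iff] at h1
      change 0 < 0 + cpair η α ∨ (0 + cpair η α = 0 ∧ (rAct y α).IsPos) at h0
      have hcn : (η (Root.neg' α).i - η (Root.neg' α).j) = -cpair η α := cpair_neg' η α
      rw [hcn] at h1
      have hc0 : 0 ≤ cpair η α := by rcases h0 with h | ⟨h, _⟩ <;> omega
      have hcz : cpair η α = 0 → (rAct y α).IsPos := by
        intro hz
        rcases h0 with h | ⟨_, h⟩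
        · omega
        · exact h
      have hcq : cpair η α ≤ q := by rcases h1 with h | ⟨h, _⟩ <;> omega
      have hcqp : cpair η α = q → ¬ (rAct y α).IsPos := by
        intro hz
        rcases h1 with h | ⟨_, h⟩
        · omega
        · exact h
      constructor
      · intro hyp
        refine ⟨hc0, ?_⟩
        by_contra hle
        have : cpair η α = q := by omega
        exact hcqp this hyp
      · intro hyp
        refine ⟨?_, hcq⟩
        by_contra hle
        have : cpair η α = 0 := by omega
        exact hyp (hcz this)
    · rintro H ⟨α, m⟩ hmem hpos
      have hdvd : (q : ℤ) ∣ m := (mem_aIntegral_zero hk _).mp hmem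
      rcases hpos with hm | ⟨hm0, hαpos⟩
      · -- m > 0, so m ≥ q
        replace hm : (0 : ℤ) < m := hm
        have hmq : (q : ℤ) ≤ m := Int.le_of_dvd hm hdvd
        by_cases hαp : α.IsPos
        · have hc0 : 0 ≤ cpair η α := by
            obtain ⟨g1, g2⟩ := H α hαp
            by_cases hy : (rAct y α).IsPos
            · exact (g1 hy).1
            · have := (g2 hy).1; omega
          left
          show 0 < m + (η α.i - η α.j)
          have : η α.i - η α.j = cpair η α := rfl
          omega
        · have hα' : α.neg'.IsPos := (neg'_isPos_iff α).mpr hαp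
          obtain ⟨g1, g2⟩ := H α.neg' hα'
          have hc' : cpair η α.neg' ≤ q := by
            by_cases hy : (rAct y α.neg').IsPos
            · have := (g1 hy).2; omega
            · exact (g2 hy).2
          have hgq : cpair η α.neg' = q → (rAct y α).IsPos := by
            intro he
            by_contra hnp
            have : (rAct y α.neg').IsPos := by
              rw [rAct_neg', neg'_isPos_iff]
              exact hnp
            have := (g1 this).2
            omega
          have hcn : cpair η α.neg' = -cpair η α := cpair_neg' η α
          have hcval : η α.i - η α.j = cpair η α := rfl
          by_cases hz : 0 < m + (η α.i - η α.j)
          · exact Or.inl hz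
          · right
            have h1 : m + cpair η α = 0 := by omega
            have h2 : cpair η α.neg' = q := by omega
            refine ⟨?_, hgq h2⟩
            show m + (η α.i - η α.j) = 0
            omega
      · -- m = 0, α positive
        replace hm0 : m = 0 := hm0
        replace hαpos : α.IsPos := hαpos
        subst hm0
        obtain ⟨g1, g2⟩ := H α hαpos
        have hcval : η α.i - η α.j = cpair η α := rfl
        by_cases hy : (rAct y α).IsPos
        · rcases (g1 hy).1.lt_or_eq with h | h
          · exact Or.inl (by show 0 < 0 + (η α.i - η α.j); omega)
          · exact Or.inr ⟨by show 0 + (η α.i - η α.j) = 0; omega, hy⟩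
        · exact Or.inl (by have := (g2 hy).1; show 0 < 0 + (η α.i - η α.j); omega)
  refine ⟨main, fun hdom hθ => main.trans ?_⟩
  have hθ' : η 0 - η (Fin.last n) ≤ (q : ℤ) - 1 := hθ
  have hbound : ∀ α : Root n, α.IsPos → 0 ≤ cpair η α ∧ cpair η α ≤ (q : ℤ) - 1 := by
    intro α hα
    have h1 : η α.j ≤ η α.i := dom_antitone hdom α.i α.j (le_of_lt hα)
    have h2 : η α.i ≤ η 0 := dom_antitone hdom 0 α.i (Fin.zero_le _)
    have h3 : η (Fin.last n) ≤ η α.j := dom_antitone hdom α.j (Fin.last n) (Fin.le_last _)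
    have : cpair η α = η α.i - η α.j := rfl
    omega
  have hmemS : ∀ α : Root n, α.IsPos → (α ∈ DeltaSigma (PiEta η) ↔ cpair η α = 0) := by
    intro α hα
    have hij : (α.i : ℕ) < (α.j : ℕ) := hα
    have hmin : min (α.i : ℕ) (α.j : ℕ) = (α.i : ℕ) := by omega
    have hmax : max (α.i : ℕ) (α.j : ℕ) = (α.j : ℕ) := by omega
    constructor
    · intro hS
      have hsteps : ∀ t : Fin n, (α.i : ℕ) ≤ (t : ℕ) → (t : ℕ) < (α.j : ℕ) →
          η t.castSucc = η t.succ := by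
        intro t ht1 ht2
        have ht := hS t (by omega) (by omega)
        simpa [PiEta] using ht
      have htel := eta_telescope (η := η) ((α.j : ℕ) - (α.i : ℕ)) α.i α.j (by omega) hsteps
      show η α.i - η α.j = 0
      omega
    · intro hc t ht1 ht2
      rw [hmin] at ht1; rw [hmax] at ht2
      have hcv : η α.i - η α.j = 0 := hc
      have h1 : η t.castSucc ≤ η α.i :=
        dom_antitone hdom α.i t.castSucc (Fin.le_def.mpr (by simp; omega))
      have h2 : η α.j ≤ η t.succ :=
        dom_antitone hdom t.succ α.j (Fin.le_def.mpr (by simp [Fin.val_succ]; omega))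
      have h3 : η t.succ ≤ η t.castSucc := hdom t
      simp only [PiEta, Finset.mem_filter, Finset.mem_univ, true_and]
      omega
  constructor
  · intro H α hα hnp
    rw [inv_inv] at hnp
    intro hS
    have h1 := (H α hα).2 hnp
    have h2 := (hmemS α hα).mp hS
    omega
  · intro hw α hα
    refine ⟨fun _ => hbound α hα, fun hnp => ?_⟩
    have hni : ¬ (rAct (y⁻¹)⁻¹ α).IsPos := by rwa [inv_inv]
    have hns := hw α hα hni
    have hc0 := hbound α hα
    have : cpair η α ≠ 0 := fun h => hns ((hmemS α hα).mpr h)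
    exact ⟨by omega, by omega⟩

end

end PaperSL
end

section
/- Let g = sl_{n+1}(ℂ), let p be a standard parabolic subalgebra of g with simple-root set Σ_p ⊆ Π, and let j ∈ {1,…,n}. Then w_j ∈ W^p if and only if α_j ∉ Σ_p. Moreover, the elements of W_+^p preserve the set W^p under left multiplication: if w_j ∈ W_+^p and w ∈ W^p, then w_j w ∈ W^p. -/
/-!
Combinatorial model for the paper "Admissible representations of simple affine
vertex algebras" for `g = sl_{n+1}(ℂ)`.

* `Weight n` models `h*` (linear functionals on diagonal matrices; every notion
  used below depends only on differences of coordinates, hence is well defined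
  on the honest `h*`, the quotient by the constants).
* `Weyl n` is the Weyl group `S_{n+1}` of `sl_{n+1}`.
* `Root n` is the root system: pairs `(i,j)`, `i ≠ j`, representing `ε_i - ε_j`.
-/

namespace PaperSL

noncomputable section

variable {n : ℕ}

private lemma addmod {m s a : ℕ} (hs : s < 2 * m) (h : s % m = a) :
    s = a ∨ s = a + m := by
  rcases Nat.lt_or_ge s m with h' | h'
  · left; rw [Nat.mod_eq_of_lt h'] at h; omega
  · right
    rw [Nat.mod_eq_sub_mod h', Nat.mod_eq_of_lt (by omega)] at h
    omega

private lemma root_ext {n : ℕ} {α β : Root n} (h1 : α.i = β.i) (h2 : α.j = β.j) :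
    α = β := by
  cases α; cases β; simp_all

private lemma val_one' {n : ℕ} (hn : 0 < n) : ((1 : Fin (n + 1)) : ℕ) = 1 := by
  rw [Fin.val_one']; exact Nat.mod_eq_of_lt (by omega)

private lemma mem_extSet {n : ℕ} (hn : 0 < n) (α : Root n) :
    α ∈ extSet hn ↔ α.j = α.i + 1 := by
  constructor
  · rintro (⟨r, rfl⟩ | h)
    · apply Fin.ext
      have := r.isLt
      rw [Fin.val_add, val_one' hn]
      simp only [simple, Fin.val_succ, Fin.coe_castSucc]
      rw [Nat.mod_eq_of_lt (by omega)]
    · rw [Set.mem_singleton_iff] at h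
      subst h
      apply Fin.ext
      rw [Fin.val_add, val_one' hn]
      simp only [negTheta, Fin.val_last, Fin.val_zero]
      rw [Nat.mod_self]
  · intro hj
    by_cases hi : (α.i : ℕ) < n
    · left
      refine ⟨⟨(α.i : ℕ), hi⟩, ?_⟩
      refine root_ext (Fin.ext ?_) (Fin.ext ?_)
      · simp [simple]
      · rw [hj, Fin.val_add, val_one' hn]
        simp only [simple, Fin.val_succ]
        rw [Nat.mod_eq_of_lt (by omega)]
    · right
      have hi' : (α.i : ℕ) = n := by have := α.i.isLt; omega
      rw [Set.mem_singleton_iff]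
      refine (root_ext (Fin.ext ?_) (Fin.ext ?_)).symm
      · simp [negTheta, hi']
      · rw [hj, Fin.val_add, val_one' hn]
        simp only [negTheta, Fin.val_zero]
        rw [hi', Nat.mod_self]

private lemma wj_apply {n : ℕ} (hn : 0 < n) {w : Weyl n} {j : Fin n}
    (h : IsWj hn w j) (i : Fin (n + 1)) : w i = i + j.succ := by
  have hstep : ∀ a : Fin (n + 1), w (a + 1) = w a + 1 := by
    intro a
    have hne : a ≠ a + 1 := by
      intro hh
      have h2 := congrArg Fin.val hh
      rcases Nat.lt_or_ge (a : ℕ) n with hc | hc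
      · rw [Fin.val_add, val_one' hn, Nat.mod_eq_of_lt (by omega)] at h2
        omega
      · have ha : (a : ℕ) = n := by have := a.isLt; omega
        rw [Fin.val_add, val_one' hn, ha, Nat.mod_self] at h2
        omega
    have hmem : (⟨a, a + 1, hne⟩ : Root n) ∈ extSet hn := by
      rw [mem_extSet hn]
    have hmem2 : rAct w ⟨a, a + 1, hne⟩ ∈ extSet hn := by
      rw [← h.1]; exact Set.mem_image_of_mem _ hmem
    exact (mem_extSet hn _).mp hmem2
  have h0 : w 0 = j.succ := congrArg Root.j h.2
  induction i using Fin.induction with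
  | zero => rw [zero_add]; exact h0
  | succ i ih =>
      have hsc : (i.succ : Fin (n + 1)) = i.castSucc + 1 := by
        apply Fin.ext
        have := i.isLt
        rw [Fin.val_add, val_one' hn]
        simp only [Fin.val_succ, Fin.coe_castSucc]
        rw [Nat.mod_eq_of_lt (by omega)]
      rw [hsc, hstep, ih, add_right_comm]

/-- For a standard parabolic subalgebra `p` with simple roots
`Σ_p ⊆ Π` and `j ∈ {1,…,n}`: `w_j ∈ W^p` iff `α_j ∉ Σ_p`; moreover left
multiplication by elements `w_j ∈ W₊^p` preserves `W^p`. -/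
theorem statement4 (n : ℕ) (hn : 0 < n) (Sg : Finset (Fin n)) (j : Fin n)
    (wj : Weyl n) (hwj : IsWj hn wj j) :
    (wj ∈ WSet (DeltaSigma Sg) ↔ j ∉ Sg) ∧
    (fixesSigma wj Sg →
      ∀ w ∈ WSet (DeltaSigma Sg), wj * w ∈ WSet (DeltaSigma Sg)) := by
  have hrot := wj_apply hn hwj
  have hcv : ((j.succ : Fin (n + 1)) : ℕ) = (j : ℕ) + 1 := rfl
  have hjn := j.isLt
  have hinv : ∀ i : Fin (n + 1),
      (((wj⁻¹ i : Fin (n + 1)) : ℕ) + ((j : ℕ) + 1)) % (n + 1) = (i : ℕ) := by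
    intro i
    have h1 : wj (wj⁻¹ i) = i := Equiv.apply_symm_apply wj i
    rw [hrot] at h1
    have h2 := congrArg Fin.val h1
    rw [Fin.val_add, hcv] at h2
    exact h2
  constructor
  · constructor
    · -- wj ∈ WSet → j ∉ Sg
      intro hW hjSg
      simp only [WSet, Set.mem_setOf_eq] at hW
      have hpos : (simple j).IsPos := by
        simp only [Root.IsPos, simple, Fin.lt_def, Fin.coe_castSucc, Fin.val_succ]
        omega
      have hmem : simple j ∈ DeltaSigma Sg := by
        simp only [DeltaSigma, Set.mem_setOf_eq]
        intro t ht1 ht2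
        simp only [simple, Fin.coe_castSucc, Fin.val_succ] at ht1 ht2
        have ht : t = j := Fin.ext (by omega)
        rwa [ht]
      refine hW (simple j) hpos ?_ hmem
      intro hcon
      have hcon' : ((wj⁻¹ (j.castSucc) : Fin (n + 1)) : ℕ)
          < ((wj⁻¹ (j.succ) : Fin (n + 1)) : ℕ) := hcon
      have hp := hinv j.castSucc
      have hq := hinv j.succ
      have hb1 := (wj⁻¹ j.castSucc).isLt
      have hb2 := (wj⁻¹ j.succ).isLt
      simp only [Fin.coe_castSucc, Fin.val_succ] at hp hq
      have hd1 := addmod (by omega) hp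
      have hd2 := addmod (by omega) hq
      omega
    · -- j ∉ Sg → wj ∈ WSet
      intro hjSg
      simp only [WSet, Set.mem_setOf_eq]
      intro α hpos hneg hmemα
      simp only [DeltaSigma, Set.mem_setOf_eq] at hmemα
      have hab : (α.i : ℕ) < (α.j : ℕ) := hpos
      have hnp : ¬ ((wj⁻¹ α.i : Fin (n + 1)) : ℕ) < ((wj⁻¹ α.j : Fin (n + 1)) : ℕ) := hneg
      have hp := hinv α.i
      have hq := hinv α.j
      have hb1 := (wj⁻¹ α.i).isLt
      have hb2 := (wj⁻¹ α.j).isLt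
      have hia := α.i.isLt
      have hib := α.j.isLt
      have hd1 := addmod (by omega) hp
      have hd2 := addmod (by omega) hq
      exact hjSg (hmemα j (by omega) (by omega))
  · -- left multiplication
    intro hf w hw
    have hF2 : ∀ s : Fin n, s ∈ Sg →
        ∃ r : Fin n, r ∈ Sg ∧ ((r : ℕ) + ((j : ℕ) + 1)) % (n + 1) = (s : ℕ) := by
      intro s hs
      have hmem : simple s ∈ rAct wj '' (simple '' (Sg : Set (Fin n))) := by
        rw [hf]; exact ⟨s, hs, rfl⟩
      obtain ⟨x, ⟨r, hr, rfl⟩, hx⟩ := hmem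
      refine ⟨r, hr, ?_⟩
      have h1 : wj r.castSucc = s.castSucc := congrArg Root.i hx
      rw [hrot] at h1
      have h2 := congrArg Fin.val h1
      rw [Fin.val_add, hcv] at h2
      simpa using h2
    have hjSg : j ∉ Sg := by
      intro hj
      obtain ⟨r, hr, hrc⟩ := hF2 j hj
      have hrn := r.isLt
      have hd := addmod (by omega) hrc
      omega
    simp only [WSet, Set.mem_setOf_eq] at hw ⊢
    intro α hpos hneg hmemα
    simp only [DeltaSigma, Set.mem_setOf_eq] at hmemα
    have hab : (α.i : ℕ) < (α.j : ℕ) := hpos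
    have hp := hinv α.i
    have hq := hinv α.j
    have hb1 := (wj⁻¹ α.i).isLt
    have hb2 := (wj⁻¹ α.j).isLt
    have hia := α.i.isLt
    have hib := α.j.isLt
    have hd1 := addmod (by omega) hp
    have hd2 := addmod (by omega) hq
    have hnint : ¬ ((α.i : ℕ) ≤ (j : ℕ) ∧ (j : ℕ) < (α.j : ℕ)) := by
      rintro ⟨h1, h2⟩
      exact hjSg (hmemα j (by omega) (by omega))
    have hpq : ((wj⁻¹ α.i : Fin (n + 1)) : ℕ) < ((wj⁻¹ α.j : Fin (n + 1)) : ℕ) := by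
      omega
    have hβpos : (rAct wj⁻¹ α).IsPos := hpq
    have hβmem : rAct wj⁻¹ α ∈ DeltaSigma Sg := by
      simp only [DeltaSigma, Set.mem_setOf_eq, rAct]
      intro t ht1 ht2
      have htn := t.isLt
      rcases hd1 with h1 | h1 <;> rcases hd2 with h2 | h2
      · -- no wrap on both
        have hsn : (t : ℕ) + (j : ℕ) + 1 < n := by omega
        have hsSg : (⟨(t : ℕ) + (j : ℕ) + 1, hsn⟩ : Fin n) ∈ Sg :=
          hmemα _ (by simp; omega) (by simp; omega)
        obtain ⟨r, hr, hrc⟩ := hF2 _ hsSg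
        have hrn := r.isLt
        have hd := addmod (by omega) hrc
        simp only at hd
        have hrt : r = t := Fin.ext (by omega)
        exact hrt ▸ hr
      · omega
      · omega
      · -- wrap on both
        have hsn : (t : ℕ) + (j : ℕ) + 1 - (n + 1) < n := by omega
        have hsSg : (⟨(t : ℕ) + (j : ℕ) + 1 - (n + 1), hsn⟩ : Fin n) ∈ Sg :=
          hmemα _ (by simp; omega) (by simp; omega)
        obtain ⟨r, hr, hrc⟩ := hF2 _ hsSg
        have hrn := r.isLt
        have hd := addmod (by omega) hrc
        simp only at hd
        have hrt : r = t := Fin.ext (by omega)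
        exact hrt ▸ hr
    have hcomp : rAct (wj * w)⁻¹ α = rAct w⁻¹ (rAct wj⁻¹ α) := by
      simp only [rAct, mul_inv_rev, Equiv.Perm.mul_apply]
    exact hw (rAct wj⁻¹ α) hβpos (hcomp ▸ hneg) hβmem

end

end PaperSL
end
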